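/- Let x and y be binary strings that each begin and end with the character 0. Let k and ℓ be the number of runs of x and y respectively (both of which are odd), suppose k ≥ ℓ, and let w_1, ..., w_k be the lengths of the runs of x in order. Then DTW(x, y) equals the minimum, over all subsets R ⊆ {2, 3, ..., k−1} with |R| = (k − ℓ)/2 that contain no two consecutive integers, of Σ_{i ∈ R} w_i. (For ℓ = k the empty minimum is 0 and DTW(x, y) = 0.) -/

import Mathlib

/-- `xb` is an expansion of the binary string `x`: it is obtained from `x` by
replacing each character of `x` with one or more consecutive copies of itself. -/
def IsExpansionOf (xb x : List (Fin 2)) : Prop :=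
  ∃ m : ℕ → ℕ, (∀ i < x.length, 1 ≤ m i) ∧
    xb = ((List.range x.length).map (fun i => List.replicate (m i) (x.getD i 0))).flatten

/-- The value of a correspondence `(a, b)`: the sum of the distances
`d(a_i, b_i) = |a_i − b_i|` between corresponding characters (`0` if `a_i = b_i`,
and `1` otherwise). -/
def corrValue (a b : List (Fin 2)) : ℕ :=
  ((a.zip b).map (fun p => if p.1 = p.2 then 0 else 1)).sum

/-- The dynamic time warping distance between binary strings `x` and `y`: the
minimum value of a correspondence, i.e. of a pair of equal-length expansions of
`x` and `y`. -/
noncomputable def DTW (x y : List (Fin 2)) : ℕ :=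
  sInf {v : ℕ | ∃ xb yb : List (Fin 2), IsExpansionOf xb x ∧ IsExpansionOf yb y ∧
    xb.length = yb.length ∧ corrValue xb yb = v}

/-- The number of runs of a string: the number of maximal substrings consisting of
a single repeated character. -/
def numRuns (x : List (Fin 2)) : ℕ := (x.splitBy (· == ·)).length

/-- The lengths of the runs of a string, in left-to-right order. -/
def runLengths (x : List (Fin 2)) : List ℕ := (x.splitBy (· == ·)).map List.length

namespace DTWAux

lemma fin2_sub_sub (c : Fin 2) : 1 - (1 - c) = c := by fin_cases c <;> decide
lemma fin2_ne (c : Fin 2) : ¬ ((1 - c) = c) := by fin_cases c <;> decide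
lemma fin2_ne' (c : Fin 2) : ¬ (c = 1 - c) := by fin_cases c <;> decide
lemma fin2_cases (c d : Fin 2) (h : ¬ d = c) : d = 1 - c := by
  fin_cases c <;> fin_cases d <;> simp_all

/-- alternating runs string -/
def blk : List ℕ → Fin 2 → List (Fin 2)
  | [], _ => []
  | a :: w, c => List.replicate a c ++ blk w (1 - c)

@[simp] lemma blk_nil (c : Fin 2) : blk [] c = [] := rfl
@[simp] lemma blk_cons (a : ℕ) (w : List ℕ) (c : Fin 2) :
    blk (a :: w) c = List.replicate a c ++ blk w (1 - c) := rfl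

lemma blk_length (w : List ℕ) (c : Fin 2) : (blk w c).length = w.sum := by
  induction w generalizing c with
  | nil => rfl
  | cons a w ih => simp [ih]

lemma blk_ne_nil (w : List ℕ) (c : Fin 2) (hw : ∀ a ∈ w, 1 ≤ a) (hne : w ≠ []) :
    blk w c ≠ [] := by
  intro h
  have := blk_length w c
  rw [h] at this
  cases w with
  | nil => exact hne rfl
  | cons a w =>
    simp at this
    have := hw a (by simp)
    omega

/-- groups of the run decomposition -/
def grps : List ℕ → Fin 2 → List (List (Fin 2))
  | [], _ => []
  | a :: w, c => List.replicate a c :: grps w (1 - c)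

lemma blk_eq_flatten (w : List ℕ) (c : Fin 2) : blk w c = (grps w c).flatten := by
  induction w generalizing c with
  | nil => rfl
  | cons a w ih => simp [grps, ih]

private lemma loop_replicate (n : ℕ) (c : Fin 2) (l : List (Fin 2)) (g : List (Fin 2))
    (gs : List (List (Fin 2))) :
    List.splitBy.loop (· == ·) (List.replicate n c ++ l) c g gs
      = List.splitBy.loop (· == ·) l c (List.replicate n c ++ g) gs := by
  induction n generalizing g with
  | zero => simp
  | succ n ih =>
    rw [List.replicate_succ, List.cons_append, List.splitBy.loop]
    simp only [beq_self_eq_true]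
    rw [ih]
    congr 1
    rw [List.append_cons, ← List.replicate_succ', List.replicate_succ]

private lemma loop_main (w : List ℕ) : ∀ (c : Fin 2) (g : List (Fin 2))
    (gs : List (List (Fin 2))), (∀ a ∈ w, 1 ≤ a) →
    List.splitBy.loop (· == ·) (blk w (1 - c)) c g gs
      = gs.reverse ++ [(c :: g).reverse] ++ grps w (1 - c) := by
  induction w with
  | nil =>
    intro c g gs _
    simp [List.splitBy.loop, grps]
  | cons a w ih =>
    intro c g gs hw
    have ha : 1 ≤ a := hw a (by simp)
    obtain ⟨a, rfl⟩ : ∃ b, a = b + 1 := ⟨a - 1, by omega⟩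
    rw [blk_cons, List.replicate_succ, List.cons_append, List.splitBy.loop]
    have hne : (c == (1 - c)) = false := by
      simp only [beq_eq_false_iff_ne, ne_eq]; exact fin2_ne' c
    simp only [hne]
    rw [loop_replicate]
    rw [show blk w (1 - (1 -c)) = blk w (1 - (1 - c)) from rfl]
    rw [ih (1 - c) _ _ (fun b hb => hw b (by simp [hb]))]
    simp only [grps, fin2_sub_sub, List.reverse_cons, List.reverse_append,
      List.reverse_replicate, List.reverse_nil, List.nil_append, List.append_nil,
      ← List.replicate_succ']
    simp

lemma splitBy_blk (w : List ℕ) (c : Fin 2) (hw : ∀ a ∈ w, 1 ≤ a) :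
    (blk w c).splitBy (· == ·) = grps w c := by
  cases w with
  | nil => rfl
  | cons a w =>
    have ha : 1 ≤ a := hw a (by simp)
    obtain ⟨a, rfl⟩ : ∃ b, a = b + 1 := ⟨a - 1, by omega⟩
    rw [blk_cons, List.replicate_succ, List.cons_append]
    show List.splitBy.loop _ _ _ _ _ = _
    rw [show blk w (1 - c) = blk w (1 - c) from rfl,
      loop_replicate, loop_main w c _ _ (fun b hb => hw b (by simp [hb]))]
    simp only [grps, List.reverse_cons, List.reverse_append,
      List.reverse_replicate, List.reverse_nil, List.nil_append, List.append_nil,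
      ← List.replicate_succ']
    rfl

lemma runLengths_blk (w : List ℕ) (c : Fin 2) (hw : ∀ a ∈ w, 1 ≤ a) :
    ((blk w c).splitBy (· == ·)).map List.length = w := by
  rw [splitBy_blk w c hw]
  induction w generalizing c with
  | nil => rfl
  | cons a w ih => simp [grps, ih _ (fun b hb => hw b (by simp [hb]))]

lemma exists_blk : ∀ (n : ℕ) (x : List (Fin 2)) (c : Fin 2), x.length ≤ n → x ≠ [] →
    x.head? = some c → ∃ w, (∀ a ∈ w, 1 ≤ a) ∧ w ≠ [] ∧ x = blk w c := by
  intro n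
  induction n with
  | zero => intro x c h hne _; cases x <;> simp_all
  | succ n ih =>
    intro x c hlen hne hhead
    set t := x.takeWhile (· == c) with ht
    set r := x.dropWhile (· == c) with hr
    clear_value t r
    have hx : t ++ r = x := by rw [ht, hr]; exact List.takeWhile_append_dropWhile
    have htr : t = List.replicate t.length c := by
      rw [List.eq_replicate_iff]
      refine ⟨rfl, fun b hb => ?_⟩
      rw [ht] at hb
      have := List.mem_takeWhile_imp hb
      simpa using this
    have htne : t ≠ [] := by
      obtain ⟨h, x', rfl⟩ : ∃ h x', x = h :: x' := by
        cases x with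
        | nil => simp at hne
        | cons h x' => exact ⟨h, x', rfl⟩
      have : h = c := by simpa using hhead
      subst this
      simp [ht, List.takeWhile_cons]
    have htpos : 1 ≤ t.length := by
      cases t with
      | nil => simp at htne
      | cons _ _ => simp
    by_cases hrnil : r = []
    · refine ⟨[t.length], by simpa using htpos, by simp, ?_⟩
      rw [← hx, hrnil, htr]
      simp
    · have hrhead : r.head? = some (1 - c) := by
        have h1 := List.head?_dropWhile_not (· == c) x
        rw [← hr] at h1
        cases hh : r.head? with
        | none => simp [List.head?_eq_none_iff] at hh; exact absurd hh hrnil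
        | some d =>
          rw [hh] at h1
          simp only [beq_eq_false_iff_ne, ne_eq] at h1
          rw [fin2_cases c d h1]
      have hrlen : r.length ≤ n := by
        have := congrArg List.length hx
        simp at this
        omega
      obtain ⟨w', hw'1, hw'2, hw'3⟩ := ih r (1 - c) hrlen hrnil hrhead
      refine ⟨t.length :: w', ?_, by simp, ?_⟩
      · intro a ha
        rcases List.mem_cons.1 ha with rfl | h
        · exact htpos
        · exact hw'1 a h
      · rw [← hx, blk_cons, ← hw'3]
        rw [htr]
        simp

open Fin.NatCast in
lemma blk_getLast (w : List ℕ) (c : Fin 2) (hw : ∀ a ∈ w, 1 ≤ a) (hne : w ≠ []) :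
    (blk w c).getLast? = some (c + ((w.length - 1 : ℕ) : Fin 2)) := by
  induction w generalizing c with
  | nil => simp at hne
  | cons a w ih =>
    have ha : 1 ≤ a := hw a (by simp)
    by_cases hw0 : w = []
    · subst hw0
      obtain ⟨a, rfl⟩ : ∃ b, a = b + 1 := ⟨a - 1, by omega⟩
      simp [List.getLast?_replicate]
    · rw [blk_cons, List.getLast?_append]
      rw [ih (1 - c) (fun b hb => hw b (by simp [hb])) hw0]
      have hl : 1 ≤ w.length := by
        cases w with
        | nil => simp at hw0
        | cons _ _ => simp
      simp only [Option.some_or]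
      congr 1
      obtain ⟨m, hm⟩ : ∃ m, w.length = m + 1 := ⟨w.length - 1, by omega⟩
      rw [hm]
      simp only [Nat.add_sub_cancel, List.length_cons, hm]
      have : (1 : Fin 2) - c = c + 1 := by fin_cases c <;> decide
      rw [this]
      push_cast
      rw [add_assoc, add_comm (1 : Fin 2)]

/-- inductive characterization of expansions -/
inductive Exp : List (Fin 2) → List (Fin 2) → Prop
  | nil : Exp [] []
  | cons {xb x : List (Fin 2)} (n : ℕ) (c : Fin 2) (h : 1 ≤ n) (hx : Exp xb x) :
      Exp (List.replicate n c ++ xb) (c :: x)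

lemma exp_iff (xb x : List (Fin 2)) : IsExpansionOf xb x ↔ Exp xb x := by
  constructor
  · rw [IsExpansionOf]
    rintro ⟨m, hm, rfl⟩
    induction x generalizing m with
    | nil => exact Exp.nil
    | cons c x ih =>
      simp only [List.length_cons, List.range_succ_eq_map, List.map_cons, List.map_map,
        List.flatten_cons]
      refine Exp.cons _ _ (hm 0 (by simp)) ?_
      have : ∀ i < x.length, 1 ≤ (m ∘ Nat.succ) i := fun i hi => hm (i+1) (by simpa using hi)
      have h2 := ih (m ∘ Nat.succ) this
      convert h2 using 2
      all_goals simp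
  · intro h
    induction h with
    | nil => exact ⟨fun _ => 1, by simp, by simp⟩
    | cons n c hn hx ih =>
      obtain ⟨m, hm, hflat⟩ := ih
      refine ⟨fun i => if i = 0 then n else m (i - 1), fun i hi => ?_, ?_⟩
      · rcases Nat.eq_zero_or_pos i with rfl | hpos
        · simp [hn]
        · have hne : ¬ i = 0 := by omega
          simp only [hne, if_false]
          refine hm (i-1) ?_
          simp only [List.length_cons] at hi
          omega
      · simp only [List.length_cons, List.range_succ_eq_map, List.map_cons, List.map_map,
          List.flatten_cons, if_pos rfl]
        rw [hflat]
        congr 1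
        all_goals try simp
        all_goals (congr 1; apply List.map_congr_left; intro i _; simp)

lemma Exp.append {xb x yb y : List (Fin 2)} (h1 : Exp xb x) (h2 : Exp yb y) :
    Exp (xb ++ yb) (x ++ y) := by
  induction h1 with
  | nil => simpa
  | cons n c hn hx ih =>
    rw [List.append_assoc, List.cons_append]
    exact Exp.cons n c hn ih

lemma Exp.replicate {a b : ℕ} (c : Fin 2) (ha : 1 ≤ a) (hab : a ≤ b) :
    Exp (List.replicate b c) (List.replicate a c) := by
  induction a generalizing b with
  | zero => omega
  | succ a ih =>
    by_cases ha0 : a = 0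
    · subst ha0
      have : List.replicate b c = List.replicate b c ++ ([] : List (Fin 2)) := by simp
      rw [this]
      exact Exp.cons b c (by omega) Exp.nil
    · obtain ⟨b, rfl⟩ : ∃ b', b = b' + 1 := ⟨b - 1, by omega⟩
      have h1 : List.replicate (b+1) c = List.replicate 1 c ++ List.replicate b c := by
        simp [List.replicate_succ]
      rw [h1, List.replicate_succ]
      exact Exp.cons 1 c le_rfl (ih (by omega) (by omega))

lemma exp_replicate_append {xb t : List (Fin 2)} {a : ℕ} {c : Fin 2}
    (h : Exp xb (List.replicate a c ++ t)) :
    ∃ b xb2, a ≤ b ∧ xb = List.replicate b c ++ xb2 ∧ Exp xb2 t := by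
  induction a generalizing xb with
  | zero => exact ⟨0, xb, le_rfl, by simp, by simpa using h⟩
  | succ a ih =>
    rw [List.replicate_succ, List.cons_append] at h
    cases h with
    | cons n _ hn hx =>
      obtain ⟨b, xb2, hab, rfl, h2⟩ := ih hx
      exact ⟨n + b, xb2, by omega, by rw [List.replicate_add, List.append_assoc], h2⟩

lemma exp_blk {xb : List (Fin 2)} {w : List ℕ} {c : Fin 2} (hw : ∀ a ∈ w, 1 ≤ a)
    (h : Exp xb (blk w c)) :
    ∃ w', List.Forall₂ (· ≤ ·) w w' ∧ xb = blk w' c := by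
  induction w generalizing c xb with
  | nil =>
    cases h
    · exact ⟨[], List.Forall₂.nil, rfl⟩
  | cons a w ih =>
    rw [blk_cons] at h
    obtain ⟨b, xb2, hab, rfl, h2⟩ := exp_replicate_append h
    obtain ⟨w', hw', rfl⟩ := ih (fun b hb => hw b (by simp [hb])) h2
    exact ⟨b :: w', List.Forall₂.cons hab hw', rfl⟩

@[simp] lemma corrValue_nil : corrValue [] [] = 0 := rfl

lemma corrValue_append {a b a' b' : List (Fin 2)} (h : a.length = b.length) :
    corrValue (a ++ a') (b ++ b') = corrValue a b + corrValue a' b' := by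
  unfold corrValue
  rw [List.zip_append h, List.map_append, List.sum_append]

lemma corrValue_replicate (n : ℕ) (c d : Fin 2) :
    corrValue (List.replicate n c) (List.replicate n d) = if c = d then 0 else n := by
  unfold corrValue
  induction n with
  | zero => simp
  | succ n ih =>
    rw [List.replicate_succ, List.replicate_succ, List.zip_cons_cons, List.map_cons,
      List.sum_cons, ih]
    by_cases h : c = d <;> simp [h] <;> omega

/-- shifting a finset down -/
lemma shift_down (R : Finset ℕ) (d : ℕ) (hd : ∀ i ∈ R, d ≤ i) (f : ℕ → ℕ) :
    ∃ S : Finset ℕ, (∀ j, j ∈ S ↔ j + d ∈ R) ∧ S.card = R.card ∧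
      (∑ j ∈ S, f j) = ∑ i ∈ R, f (i - d) := by
  have hinj : ∀ x ∈ R, ∀ y ∈ R, x - d = y - d → x = y := by
    intro x hx y hy h
    have := hd x hx; have := hd y hy; omega
  refine ⟨R.image (· - d), fun j => ?_, Finset.card_image_of_injOn hinj, Finset.sum_image hinj⟩
  constructor
  · rintro hj
    simp only [Finset.mem_image] at hj
    obtain ⟨i, hi, rfl⟩ := hj
    have := hd i hi
    rwa [show i - d + d = i by omega]
  · intro h
    simp only [Finset.mem_image]
    exact ⟨j + d, h, by omega⟩

/-- cardinality bound for sets with no two consecutive elements -/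
lemma card_no2consec {R : Finset ℕ} {M : ℕ} (h2 : ∀ i ∈ R, i + 1 ∉ R)
    (hsub : R ⊆ Finset.Icc 2 M) : R.card ≤ M / 2 := by
  have hinj : ∀ x ∈ R, ∀ y ∈ R, x / 2 = y / 2 → x = y := by
    intro x hx y hy h
    by_contra hne
    rcases Nat.lt_or_ge x y with hlt | hge
    · have : y = x + 1 := by omega
      exact h2 x hx (this ▸ hy)
    · have hlt : y < x := by omega
      have : x = y + 1 := by omega
      exact h2 y hy (this ▸ hx)
  have himg : R.image (· / 2) ⊆ Finset.Icc 1 (M / 2) := by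
    intro j hj
    simp only [Finset.mem_image] at hj
    obtain ⟨i, hi, rfl⟩ := hj
    have := hsub hi
    simp only [Finset.mem_Icc] at this ⊢
    omega
  calc R.card = (R.image (· / 2)).card := (Finset.card_image_of_injOn hinj).symm
    _ ≤ (Finset.Icc 1 (M / 2)).card := Finset.card_le_card himg
    _ = M / 2 := by rw [Nat.card_Icc]; omega

lemma fin2_inj (c d : Fin 2) : (1 - c = 1 - d) ↔ (c = d) := by
  fin_cases c <;> fin_cases d <;> decide

lemma fin2_opp (c d : Fin 2) : (1 - c = d) ↔ ¬ (c = d) := by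
  fin_cases c <;> fin_cases d <;> decide

lemma fin2_opp' (c d : Fin 2) : (c = 1 - d) ↔ ¬ (c = d) := by
  fin_cases c <;> fin_cases d <;> decide

lemma one_le_sum {w : List ℕ} (hne : w ≠ []) (hw : ∀ a ∈ w, 1 ≤ a) : 1 ≤ w.sum := by
  cases w with
  | nil => simp at hne
  | cons a w => have := hw a (by simp); simp; omega

lemma sum_zero_nil {w : List ℕ} (hw : ∀ a ∈ w, 1 ≤ a) (h : w.sum = 0) : w = [] := by
  cases w with
  | nil => rfl
  | cons a w => have := hw a (by simp); simp at h; omega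

lemma blk_split {a b : ℕ} (hab : a ≤ b) (u₁ : List ℕ) (d : Fin 2) :
    blk (b :: u₁) d = List.replicate a d ++ blk ((b - a) :: u₁) d := by
  simp only [blk_cons, ← List.append_assoc, ← List.replicate_add]
  congr 2
  omega

lemma finishR {R : Finset ℕ} {lo hi T : ℕ} {f : ℕ → ℕ} {V : ℕ}
    (h1 : R ⊆ Finset.Icc lo hi) (h2 : ∀ i ∈ R, i + 1 ∉ R) (h3 : T ≤ R.card)
    (h4 : ∑ i ∈ R, f i ≤ V) :
    ∃ S : Finset ℕ, S ⊆ Finset.Icc lo hi ∧ (∀ i ∈ S, i + 1 ∉ S) ∧ S.card = T ∧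
      ∑ i ∈ S, f i ≤ V := by
  obtain ⟨S, hS, hcard⟩ := Finset.exists_subset_card_eq h3
  exact ⟨S, hS.trans h1, fun i hi hi1 => h2 i (hS hi) (hS hi1), hcard,
    le_trans (Finset.sum_le_sum_of_subset hS) h4⟩

def upShift : ℕ ↪ ℕ := ⟨fun n => n + 1, fun a b h => by simpa using h⟩

@[simp] lemma upShift_apply (n : ℕ) : upShift n = n + 1 := rfl

lemma mem_upShift {R : Finset ℕ} {j : ℕ} :
    j ∈ R.map upShift ↔ ∃ i ∈ R, i + 1 = j := by
  simp [upShift_apply, Finset.mem_map]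

lemma no2_upShift {R : Finset ℕ} (h : ∀ i ∈ R, i + 1 ∉ R) :
    ∀ i ∈ R.map upShift, i + 1 ∉ R.map upShift := by
  intro i hi h1
  obtain ⟨i', hi', rfl⟩ := mem_upShift.1 hi
  obtain ⟨j', hj', hj'eq⟩ := mem_upShift.1 h1
  have : j' = i' + 1 := by omega
  exact h i' hi' (this ▸ hj')

lemma sum_upShift {R : Finset ℕ} (a : ℕ) (w : List ℕ) :
    ∑ i ∈ R.map upShift, (a :: w).getD i 0 = ∑ i ∈ R, w.getD i 0 := by
  rw [Finset.sum_map]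
  apply Finset.sum_congr rfl
  intro i _
  simp [upShift_apply]

lemma lb_master : ∀ (N : ℕ) (w u : List ℕ) (c d : Fin 2) (B : Bool),
    w.sum ≤ N → w ≠ [] → u ≠ [] → (∀ a ∈ w, 1 ≤ a) → (∀ a ∈ u, 1 ≤ a) →
    w.sum = u.sum →
    ((c = d) ↔ (w.length % 2 = u.length % 2)) →
    (B = true → ¬ c = d) →
    ∃ R : Finset ℕ,
      R ⊆ Finset.Icc (if B then 0 else 1) (w.length - 2) ∧
      (∀ i ∈ R, i + 1 ∉ R) ∧
      R.card = (w.length + (if B then 1 else 0) - u.length) / 2 ∧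
      ∑ i ∈ R, w.getD i 0 ≤ corrValue (blk w c) (blk u d) := by
  intro N
  induction N with
  | zero =>
    intro w u c d B hN hwne _ hw _ _ _ _
    have := one_le_sum hwne hw
    omega
  | succ N ih =>
    intro w u c d B hN hwne hune hw hu hsum hpar hB
    obtain ⟨a, w₁, rfl⟩ : ∃ a w₁, w = a :: w₁ := by
      cases w with | nil => simp at hwne | cons a w₁ => exact ⟨a, w₁, rfl⟩
    obtain ⟨b, u₁, rfl⟩ : ∃ b u₁, u = b :: u₁ := by
      cases u with | nil => simp at hune | cons b u₁ => exact ⟨b, u₁, rfl⟩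
    have ha : 1 ≤ a := hw a (by simp)
    have hb : 1 ≤ b := hu b (by simp)
    have hw₁ : ∀ x ∈ w₁, 1 ≤ x := fun x hx => hw x (by simp [hx])
    have hu₁ : ∀ x ∈ u₁, 1 ≤ x := fun x hx => hu x (by simp [hx])
    simp only [List.sum_cons] at hsum hN
    simp only [List.length_cons] at hpar ⊢
    rcases lt_trichotomy a b with hab | hab | hab
    · -- a < b : x finishes its run first
      have hw₁ne : w₁ ≠ [] := by
        rintro rfl
        simp at hsum
        have h1 : 1 ≤ u₁.sum :=
          one_le_sum (by rintro rfl; simp at hsum; omega) hu₁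
        omega
      have hlw : 1 ≤ w₁.length := List.length_pos_iff.2 hw₁ne
      have hcorr : corrValue (blk (a :: w₁) c) (blk (b :: u₁) d)
          = (if c = d then 0 else a) + corrValue (blk w₁ (1 - c)) (blk ((b - a) :: u₁) d) := by
        rw [blk_split (le_of_lt hab) u₁ d, blk_cons (a := a),
          corrValue_append (by simp), corrValue_replicate]
      have hument : ∀ x ∈ (b - a) :: u₁, 1 ≤ x := by
        intro x hx
        rcases List.mem_cons.1 hx with rfl | h
        exacts [by omega, hu₁ x h]
      have hparg : ((1 - c = d) ↔ (w₁.length % 2 = ((b - a) :: u₁).length % 2)) := by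
        rw [fin2_opp, hpar]; simp only [List.length_cons]; omega
      by_cases hcd : c = d
      · -- aligned parent, B = false; child anti with charge allowed
        have hp : (w₁.length + 1) % 2 = (u₁.length + 1) % 2 := hpar.1 hcd
        have hBf : B = false := by
          cases B with
          | true => exact absurd hcd (hB rfl)
          | false => rfl
        subst hBf
        obtain ⟨R', hR'1, hR'2, hR'3, hR'4⟩ := ih w₁ ((b - a) :: u₁) (1 - c) d true
          (by omega) hw₁ne (by simp) hw₁ hument (by simp; omega) hparg
          (by intro _; rw [fin2_opp, hcd]; simp [fin2_ne])
        have hR1 : R' ⊆ Finset.Icc 0 (w₁.length - 2) := by simpa using hR'1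
        have hR3 : R'.card = (w₁.length + 1 - (u₁.length + 1)) / 2 := by simpa using hR'3
        refine finishR (R := R'.map upShift) ?_ ?_ ?_ ?_
        · intro j hj
          obtain ⟨i, hi, rfl⟩ := mem_upShift.1 hj
          have hc1 : 1 ≤ R'.card := Finset.card_pos.2 ⟨i, hi⟩
          have hmem := Finset.mem_Icc.1 (hR1 hi)
          rw [Finset.mem_Icc]
          constructor
          · split <;> (try omega) <;> (first | exact absurd ‹false = true› (by simp) | exact absurd rfl ‹¬ true = true›)
          · omega
        · exact no2_upShift hR'2
        · rw [Finset.card_map, hR3]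
          split <;> (try omega) <;> (first | exact absurd ‹false = true› (by simp) | exact absurd rfl ‹¬ true = true›)
        · rw [hcorr, if_pos hcd, zero_add, sum_upShift]
          exact hR'4
      · -- anti parent; child aligned
        have hp : ¬ ((w₁.length + 1) % 2 = (u₁.length + 1) % 2) := fun h => hcd (hpar.2 h)
        obtain ⟨R', hR'1, hR'2, hR'3, hR'4⟩ := ih w₁ ((b - a) :: u₁) (1 - c) d false
          (by omega) hw₁ne (by simp) hw₁ hument (by simp; omega) hparg
          (by intro h; simp at h)
        have hR1 : R' ⊆ Finset.Icc 1 (w₁.length - 2) := by simpa using hR'1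
        have hR3 : R'.card = (w₁.length - (u₁.length + 1)) / 2 := by simpa using hR'3
        cases B with
        | false =>
          refine finishR (R := R'.map upShift) ?_ ?_ ?_ ?_
          · intro j hj
            obtain ⟨i, hi, rfl⟩ := mem_upShift.1 hj
            have hmem := Finset.mem_Icc.1 (hR1 hi)
            rw [Finset.mem_Icc]
            constructor
            · split <;> (try omega) <;> (first | exact absurd ‹false = true› (by simp) | exact absurd rfl ‹¬ true = true›)
            · omega
          · exact no2_upShift hR'2
          · rw [Finset.card_map, hR3]
            split <;> (try omega) <;> (first | exact absurd ‹false = true› (by simp) | exact absurd rfl ‹¬ true = true›)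
          · rw [hcorr, if_neg hcd, sum_upShift]
            exact le_trans hR'4 (Nat.le_add_left _ _)
        | true =>
          have h0 : 0 ∉ R'.map upShift := by
            intro h
            obtain ⟨i, _, hi⟩ := mem_upShift.1 h
            omega
          refine finishR (R := insert 0 (R'.map upShift)) ?_ ?_ ?_ ?_
          · intro j hj
            rcases Finset.mem_insert.1 hj with rfl | hj
            · rw [Finset.mem_Icc]
              constructor
              · split <;> (try omega) <;> (first | exact absurd ‹false = true› (by simp) | exact absurd rfl ‹¬ true = true›)
              · omega
            · obtain ⟨i, hi, rfl⟩ := mem_upShift.1 hj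
              have hmem := Finset.mem_Icc.1 (hR1 hi)
              rw [Finset.mem_Icc]
              constructor
              · split <;> (try omega) <;> (first | exact absurd ‹false = true› (by simp) | exact absurd rfl ‹¬ true = true›)
              · omega
          · intro i hiR h1R
            rcases Finset.mem_insert.1 hiR with rfl | hiR
            · rcases Finset.mem_insert.1 h1R with h | h1R
              · omega
              · obtain ⟨i', hi', hieq⟩ := mem_upShift.1 h1R
                have : i' = 0 := by omega
                subst this
                have := Finset.mem_Icc.1 (hR1 hi')
                omega
            · obtain ⟨i', hi', rfl⟩ := mem_upShift.1 hiR
              rcases Finset.mem_insert.1 h1R with h | h1R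
              · omega
              · exact no2_upShift hR'2 _ hiR h1R
          · rw [Finset.card_insert_of_notMem h0, Finset.card_map, hR3]
            split <;> (try omega) <;> (first | exact absurd ‹false = true› (by simp) | exact absurd rfl ‹¬ true = true›)
          · rw [Finset.sum_insert h0, sum_upShift, hcorr, if_neg hcd]
            simp only [List.getD_cons_zero]
            omega
    · -- a = b
      subst hab
      by_cases hw₁nil : w₁ = []
      · subst hw₁nil
        have hu₁nil : u₁ = [] := by
          apply sum_zero_nil hu₁
          simp at hsum
          omega
        subst hu₁nil
        refine ⟨∅, by simp, by simp, ?_, by simp⟩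
        simp only [Finset.card_empty, List.length_nil]
        split <;> (try omega) <;> (first | exact absurd ‹false = true› (by simp) | exact absurd rfl ‹¬ true = true›)
      · have hu₁nil : u₁ ≠ [] := by
          rintro rfl
          simp at hsum
          have := one_le_sum hw₁nil hw₁
          omega
        have hlw : 1 ≤ w₁.length := List.length_pos_iff.2 hw₁nil
        have hcorr : corrValue (blk (a :: w₁) c) (blk (a :: u₁) d)
            = (if c = d then 0 else a) + corrValue (blk w₁ (1 - c)) (blk u₁ (1 - d)) := by
          rw [blk_cons, blk_cons, corrValue_append (by simp), corrValue_replicate]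
        have hparg : ((1 - c = 1 - d) ↔ (w₁.length % 2 = u₁.length % 2)) := by
          rw [fin2_inj, hpar]; omega
        by_cases hcd : c = d
        · have hp : (w₁.length + 1) % 2 = (u₁.length + 1) % 2 := hpar.1 hcd
          have hBf : B = false := by
            cases B with
            | true => exact absurd hcd (hB rfl)
            | false => rfl
          subst hBf
          obtain ⟨R', hR'1, hR'2, hR'3, hR'4⟩ := ih w₁ u₁ (1 - c) (1 - d) false
            (by omega) hw₁nil hu₁nil hw₁ hu₁ (by omega) hparg
            (by intro h; simp at h)
          have hR1 : R' ⊆ Finset.Icc 1 (w₁.length - 2) := by simpa using hR'1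
          have hR3 : R'.card = (w₁.length - u₁.length) / 2 := by simpa using hR'3
          refine finishR (R := R'.map upShift) ?_ ?_ ?_ ?_
          · intro j hj
            obtain ⟨i, hi, rfl⟩ := mem_upShift.1 hj
            have hmem := Finset.mem_Icc.1 (hR1 hi)
            rw [Finset.mem_Icc]
            constructor
            · split <;> (try omega) <;> (first | exact absurd ‹false = true› (by simp) | exact absurd rfl ‹¬ true = true›)
            · omega
          · exact no2_upShift hR'2
          · rw [Finset.card_map, hR3]
            split <;> (try omega) <;> (first | exact absurd ‹false = true› (by simp) | exact absurd rfl ‹¬ true = true›)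
          · rw [hcorr, sum_upShift]
            exact le_trans hR'4 (Nat.le_add_left _ _)
        · have hp : ¬ ((w₁.length + 1) % 2 = (u₁.length + 1) % 2) := fun h => hcd (hpar.2 h)
          obtain ⟨R', hR'1, hR'2, hR'3, hR'4⟩ := ih w₁ u₁ (1 - c) (1 - d) true
            (by omega) hw₁nil hu₁nil hw₁ hu₁ (by omega) hparg
            (by intro _; rw [fin2_inj]; exact hcd)
          have hR1 : R' ⊆ Finset.Icc 0 (w₁.length - 2) := by simpa using hR'1
          have hR3 : R'.card = (w₁.length + 1 - u₁.length) / 2 := by simpa using hR'3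
          have hlu : 1 ≤ u₁.length := List.length_pos_iff.2 hu₁nil
          refine finishR (R := R'.map upShift) ?_ ?_ ?_ ?_
          · intro j hj
            obtain ⟨i, hi, rfl⟩ := mem_upShift.1 hj
            have hc1 : 1 ≤ R'.card := Finset.card_pos.2 ⟨i, hi⟩
            have hmem := Finset.mem_Icc.1 (hR1 hi)
            rw [Finset.mem_Icc]
            constructor
            · split <;> (try omega) <;> (first | exact absurd ‹false = true› (by simp) | exact absurd rfl ‹¬ true = true›)
            · omega
          · exact no2_upShift hR'2
          · rw [Finset.card_map, hR3]
            split <;> (try omega) <;> (first | exact absurd ‹false = true› (by simp) | exact absurd rfl ‹¬ true = true›)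
          · rw [hcorr, sum_upShift]
            exact le_trans hR'4 (Nat.le_add_left _ _)
    · -- a > b : y finishes its run first
      have hu₁ne : u₁ ≠ [] := by
        rintro rfl
        simp at hsum
        have h1 : 1 ≤ w₁.sum :=
          one_le_sum (by rintro rfl; simp at hsum; omega) hw₁
        omega
      have hcorr : corrValue (blk (a :: w₁) c) (blk (b :: u₁) d)
          = (if c = d then 0 else b) + corrValue (blk ((a - b) :: w₁) c) (blk u₁ (1 - d)) := by
        rw [blk_split (le_of_lt hab) w₁ c, blk_cons (a := b) (w := u₁),
          corrValue_append (by simp), corrValue_replicate]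
      have hwent : ∀ x ∈ (a - b) :: w₁, 1 ≤ x := by
        intro x hx
        rcases List.mem_cons.1 hx with rfl | h
        exacts [by omega, hw₁ x h]
      have hparg : ((c = 1 - d) ↔ (((a - b) :: w₁).length % 2 = u₁.length % 2)) := by
        rw [fin2_opp', hpar]; simp only [List.length_cons]; omega
      obtain ⟨R', hR'1, hR'2, hR'3, hR'4⟩ := ih ((a - b) :: w₁) u₁ c (1 - d) false
        (by simp; omega)
        (by simp) hu₁ne hwent hu₁ (by simp; omega) hparg
        (by intro h; simp at h)
      have hR1 : R' ⊆ Finset.Icc 1 (w₁.length + 1 - 2) := by simpa using hR'1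
      have hR3 : R'.card = (w₁.length + 1 - u₁.length) / 2 := by simpa using hR'3
      have hcd2 : ((c = d) ↔ ((w₁.length + 1) % 2 = (u₁.length + 1) % 2)) := hpar
      have hBd : B = true → ¬ c = d := hB
      refine finishR (R := R') ?_ ?_ ?_ ?_
      · intro j hj
        have hmem := Finset.mem_Icc.1 (hR1 hj)
        rw [Finset.mem_Icc]
        constructor
        · split <;> (try omega) <;> (first | exact absurd ‹false = true› (by simp) | exact absurd rfl ‹¬ true = true›)
        · omega
      · exact hR'2
      · rw [hR3]
        by_cases hcd : c = d
        · have hpp := hpar.1 hcd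
          have hBf : B = false := by
            cases B with
            | true => exact absurd hcd (hB rfl)
            | false => rfl
          subst hBf
          split <;> (try omega) <;> (first | exact absurd ‹false = true› (by simp) | exact absurd rfl ‹¬ true = true›)
        · have hpp : ¬ ((w₁.length + 1) % 2 = (u₁.length + 1) % 2) := fun h => hcd (hpar.2 h)
          split <;> (try omega) <;> (first | exact absurd ‹false = true› (by simp) | exact absurd rfl ‹¬ true = true›)
      · rw [hcorr]
        have hsumeq : ∑ i ∈ R', (a :: w₁).getD i 0 = ∑ i ∈ R', ((a - b) :: w₁).getD i 0 := by
          apply Finset.sum_congr rfl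
          intro i hi
          have := Finset.mem_Icc.1 (hR1 hi)
          obtain ⟨j, rfl⟩ : ∃ j, i = j + 1 := ⟨i - 1, by omega⟩
          simp [List.getD_cons_succ]
        rw [hsumeq]
        exact le_trans hR'4 (Nat.le_add_left _ _)

lemma exp_blk_nil {xb : List (Fin 2)} {c : Fin 2} (h : Exp xb (blk [] c)) : xb = [] := by
  cases h
  rfl

lemma ub_master : ∀ (K : ℕ) (w u : List ℕ) (c : Fin 2) (R : Finset ℕ),
    w.length ≤ K → w ≠ [] → u ≠ [] → (∀ a ∈ w, 1 ≤ a) → (∀ a ∈ u, 1 ≤ a) →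
    u.length ≤ w.length → w.length % 2 = u.length % 2 →
    R ⊆ Finset.Icc 1 (w.length - 2) → (∀ i ∈ R, i + 1 ∉ R) →
    R.card = (w.length - u.length) / 2 →
    ∃ xb yb : List (Fin 2), Exp xb (blk w c) ∧ Exp yb (blk u c) ∧
      xb.length = yb.length ∧ corrValue xb yb ≤ ∑ i ∈ R, w.getD i 0 := by
  intro K
  induction K with
  | zero =>
    intro w u c R hK hwne _ _ _ _ _ _ _ _
    have : 1 ≤ w.length := List.length_pos_iff.2 hwne
    omega
  | succ K ih =>
    intro w u c R hK hwne hune hw hu hlen hpar hRsub hR2 hRcard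
    obtain ⟨a₀, w₁, rfl⟩ : ∃ a w₁, w = a :: w₁ := by
      cases w with | nil => simp at hwne | cons a w₁ => exact ⟨a, w₁, rfl⟩
    obtain ⟨b, u₁, rfl⟩ : ∃ b u₁, u = b :: u₁ := by
      cases u with | nil => simp at hune | cons b u₁ => exact ⟨b, u₁, rfl⟩
    have ha₀ : 1 ≤ a₀ := hw a₀ (by simp)
    have hb : 1 ≤ b := hu b (by simp)
    have hw₁ : ∀ x ∈ w₁, 1 ≤ x := fun x hx => hw x (by simp [hx])
    have hu₁ : ∀ x ∈ u₁, 1 ≤ x := fun x hx => hu x (by simp [hx])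
    simp only [List.length_cons] at hK hlen hpar hRsub hRcard ⊢
    by_cases hw₁nil : w₁ = []
    · -- single run on each side
      subst hw₁nil
      have hu₁nil : u₁ = [] := by
        cases u₁ with
        | nil => rfl
        | cons x xs => simp at hlen
      subst hu₁nil
      refine ⟨List.replicate (max a₀ b) c, List.replicate (max a₀ b) c, ?_, ?_, rfl, ?_⟩
      · rw [blk_cons, blk_nil, List.append_nil]
        exact Exp.replicate c ha₀ (le_max_left _ _)
      · rw [blk_cons, blk_nil, List.append_nil]
        exact Exp.replicate c hb (le_max_right _ _)
      · rw [corrValue_replicate, if_pos rfl]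
        exact Nat.zero_le _
    · have hlw₁ : 1 ≤ w₁.length := List.length_pos_iff.2 hw₁nil
      by_cases h1R : 1 ∈ R
      · -- run 1 (0-based) of x is flipped; group continues
        have h2R : 2 ∉ R := hR2 1 h1R
        have hk3 : 3 ≤ w₁.length + 1 := by
          have := Finset.mem_Icc.1 (hRsub h1R)
          omega
        obtain ⟨a₁, w₂, rfl⟩ : ∃ a w₂, w₁ = a :: w₂ := by
          cases w₁ with | nil => simp at hw₁nil | cons a w₂ => exact ⟨a, w₂, rfl⟩
        have ha₁ : 1 ≤ a₁ := hw₁ a₁ (by simp)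
        have hw₂ : ∀ x ∈ w₂, 1 ≤ x := fun x hx => hw₁ x (by simp [hx])
        simp only [List.length_cons] at hk3 hK hlen hpar hRsub hRcard ⊢
        have hw₂nil : w₂ ≠ [] := by
          rintro rfl
          simp at hk3
        have hcard1 : 1 ≤ R.card := Finset.card_pos.2 ⟨1, h1R⟩
        have hklgap : u₁.length + 1 + 2 ≤ w₂.length + 2 := by omega
        have herase : ∀ i ∈ R.erase 1, 2 ≤ i := by
          intro i hi
          have h1 := Finset.mem_erase.1 hi
          have h2 := Finset.mem_Icc.1 (hRsub h1.2)
          omega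
        have herase3 : ∀ i ∈ R.erase 1, 3 ≤ i := by
          intro i hi
          have h1 := Finset.mem_erase.1 hi
          have h2 := Finset.mem_Icc.1 (hRsub h1.2)
          rcases Nat.lt_or_ge i 3 with h | h
          · interval_cases i
            · omega
            · exact absurd h1.2 (by simpa using h1.1)
            · exact absurd h1.2 h2R
          · exact h
        obtain ⟨S, hSmem, hScard, hSsum⟩ :=
          shift_down (R.erase 1) 2 herase (fun j => w₂.getD j 0)
        obtain ⟨xb', yb', hxe, hye, hlen', hcost'⟩ := ih w₂ (1 :: u₁) c S
          (by omega) hw₂nil (by simp)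
          hw₂ (by intro x hx; rcases List.mem_cons.1 hx with rfl | h; exacts [le_rfl, hu₁ x h])
          (by simp; omega) (by simp; omega)
          (by intro j hj
              have h3 := herase3 _ ((hSmem j).1 hj)
              have h4 := Finset.mem_Icc.1 (hRsub (Finset.mem_erase.1 ((hSmem j).1 hj)).2)
              rw [Finset.mem_Icc]
              omega)
          (by intro j hj hj1
              have hj' := (hSmem j).1 hj
              have hj1' := (hSmem (j+1)).1 hj1
              exact hR2 (j + 2) (Finset.mem_erase.1 hj').2
                (by have := (Finset.mem_erase.1 hj1').2
                    simpa [show j + 1 + 2 = j + 2 + 1 by omega] using this))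
          (by rw [hScard, Finset.card_erase_of_mem h1R, hRcard]
              simp only [List.length_cons]
              omega)
        obtain ⟨n, yb₂, hn1, hybeq, hyb₂⟩ := exp_replicate_append
          (by rw [blk_cons] at hye; exact hye)
        -- assemble
        refine ⟨List.replicate (max a₀ b) c ++ List.replicate a₁ (1 - c) ++ xb',
          List.replicate (max a₀ b + a₁) c ++ yb', ?_, ?_, ?_, ?_⟩
        · rw [blk_cons, blk_cons, fin2_sub_sub, List.append_assoc]
          refine Exp.append (Exp.replicate c ha₀ (le_max_left _ _)) ?_
          exact Exp.append (Exp.replicate (1 - c) ha₁ le_rfl) hxe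
        · rw [blk_cons, hybeq, ← List.append_assoc, ← List.replicate_add]
          refine Exp.append (Exp.replicate c hb ?_) hyb₂
          have := le_max_right a₀ b
          omega
        · simp only [List.length_append, List.length_replicate]
          omega
        · have e1 : List.replicate (max a₀ b + a₁) c
              = List.replicate (max a₀ b) c ++ List.replicate a₁ c := List.replicate_add _ _ _
          rw [e1, corrValue_append (by simp), corrValue_append (by simp),
            corrValue_replicate, corrValue_replicate, if_pos rfl, if_neg (fin2_ne c)]
          have hsum : ∑ i ∈ R, (a₀ :: a₁ :: w₂).getD i 0
              = a₁ + ∑ i ∈ R.erase 1, (a₀ :: a₁ :: w₂).getD i 0 := by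
            rw [← Finset.sum_erase_add R _ h1R]
            simp [Nat.add_comm]
          rw [hsum]
          have hsum2 : ∑ i ∈ R.erase 1, (a₀ :: a₁ :: w₂).getD i 0
              = ∑ i ∈ R.erase 1, w₂.getD (i - 2) 0 := by
            apply Finset.sum_congr rfl
            intro i hi
            obtain ⟨j, rfl⟩ : ∃ j, i = j + 2 := ⟨i - 2, by have := herase i hi; omega⟩
            simp [List.getD_cons_succ]
          rw [hsum2, ← hSsum]
          omega
      · -- run 1 not flipped : first runs pair up
        have hu₁nil : u₁ ≠ [] := by
          rintro rfl
          simp only [List.length_nil] at hlen hpar hRcard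
          -- then w₁.length even from parity; w₁.length ≥ 1
          have hsub2 : R ⊆ Finset.Icc 2 (w₁.length + 1 - 2) := by
            intro i hi
            have h2 := Finset.mem_Icc.1 (hRsub hi)
            rw [Finset.mem_Icc]
            have : i ≠ 1 := by rintro rfl; exact h1R hi
            omega
          have := card_no2consec hR2 hsub2
          omega
        have hlu₁ : 1 ≤ u₁.length := List.length_pos_iff.2 hu₁nil
        have hmemR : ∀ i ∈ R, 1 ≤ i := by
          intro i hi
          exact (Finset.mem_Icc.1 (hRsub hi)).1
        obtain ⟨S, hSmem, hScard, hSsum⟩ := shift_down R 1 hmemR (fun j => w₁.getD j 0)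
        obtain ⟨xb', yb', hxe, hye, hlen', hcost'⟩ := ih w₁ u₁ (1 - c) S
          (by omega) hw₁nil hu₁nil hw₁ hu₁ (by omega) (by omega)
          (by intro j hj
              have hj' := (hSmem j).1 hj
              have h2 := Finset.mem_Icc.1 (hRsub hj')
              have : j + 1 ≠ 1 := by rintro h; rw [show j = 0 by omega] at hj'; exact h1R hj'
              rw [Finset.mem_Icc]
              omega)
          (by intro j hj hj1
              exact hR2 (j + 1) ((hSmem j).1 hj) ((hSmem (j+1)).1 hj1))
          (by rw [hScard, hRcard]; omega)
        refine ⟨List.replicate (max a₀ b) c ++ xb', List.replicate (max a₀ b) c ++ yb',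
          ?_, ?_, ?_, ?_⟩
        · rw [blk_cons]
          exact Exp.append (Exp.replicate c ha₀ (le_max_left _ _)) hxe
        · rw [blk_cons]
          exact Exp.append (Exp.replicate c hb (le_max_right _ _)) hye
        · simp only [List.length_append, List.length_replicate]
          omega
        · rw [corrValue_append (by simp), corrValue_replicate, if_pos rfl, zero_add]
          refine le_trans hcost' (le_of_eq ?_)
          rw [hSsum]
          apply Finset.sum_congr rfl
          intro i hi
          obtain ⟨j, rfl⟩ : ∃ j, i = j + 1 := ⟨i - 1, by have := hmemR i hi; omega⟩
          simp [List.getD_cons_succ]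


lemma forall₂_one_le {w w' : List ℕ} (h : List.Forall₂ (· ≤ ·) w w')
    (hw : ∀ a ∈ w, 1 ≤ a) : ∀ a ∈ w', 1 ≤ a := by
  induction h with
  | nil => simp
  | @cons a b l₁ l₂ hab htl ih =>
    intro x hx
    rcases List.mem_cons.1 hx with rfl | hx
    · have := hw a (by simp)
      omega
    · exact ih (fun a ha => hw a (by simp [ha])) x hx

lemma forall₂_getD_le {w w' : List ℕ} (h : List.Forall₂ (· ≤ ·) w w') :
    ∀ i, w.getD i 0 ≤ w'.getD i 0 := by
  induction h with
  | nil => simp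
  | cons hab htl ih =>
    intro i
    cases i with
    | zero => simpa using hab
    | succ i => simpa [List.getD_cons_succ] using ih i

open Fin.NatCast in
lemma canon (x : List (Fin 2)) (hx0 : x.head? = some 0) (hx1 : x.getLast? = some 0) :
    ∃ w : List ℕ, (∀ a ∈ w, 1 ≤ a) ∧ w ≠ [] ∧ w.length % 2 = 1 ∧ x = blk w 0 ∧
      runLengths x = w ∧ numRuns x = w.length := by
  have hxne : x ≠ [] := by rintro rfl; simp at hx0
  obtain ⟨w, hw, hwne, hxw⟩ := exists_blk x.length x 0 le_rfl hxne hx0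
  have hrl : runLengths x = w := by
    rw [runLengths, hxw]
    exact runLengths_blk w 0 hw
  have hnr : numRuns x = w.length := by
    have : (runLengths x).length = w.length := by rw [hrl]
    simpa [runLengths, numRuns] using this
  refine ⟨w, hw, hwne, ?_, hxw, hrl, hnr⟩
  have hlast := blk_getLast w 0 hw hwne
  rw [← hxw, hx1] at hlast
  have h2 : ((w.length - 1 : ℕ) : Fin 2) = 0 := by
    have := (Option.some_injective _ hlast).symm
    rwa [zero_add] at this
  have h3 : (w.length - 1) % 2 = 0 := by
    have := congrArg Fin.val h2
    rwa [Fin.val_natCast] at this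
  have h4 : 1 ≤ w.length := List.length_pos_iff.2 hwne
  omega

end DTWAux

/-- Let `x` and `y` be binary strings that each begin and end with the character `0`,
with `k` and `ℓ` runs respectively, `k ≥ ℓ`, and run lengths `w_1, …, w_k` of `x` in
order. Then `DTW(x, y)` equals the minimum, over all subsets `R ⊆ {2, 3, …, k−1}`
with `|R| = (k − ℓ)/2` containing no two consecutive integers, of `∑_{i ∈ R} w_i`. -/
theorem stmt_12 (x y : List (Fin 2))
    (hx0 : x.head? = some 0) (hx1 : x.getLast? = some 0)
    (hy0 : y.head? = some 0) (hy1 : y.getLast? = some 0)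
    (hkl : numRuns y ≤ numRuns x) :
    DTW x y = sInf {v : ℕ | ∃ R : Finset ℕ,
      R ⊆ Finset.Icc 2 (numRuns x - 1) ∧ (∀ i ∈ R, i + 1 ∉ R) ∧
      R.card = (numRuns x - numRuns y) / 2 ∧
      ∑ i ∈ R, (runLengths x).getD (i - 1) 0 = v} := by
  classical
  open DTWAux in
  obtain ⟨w, hw, hwne, hwodd, hxw, hrlx, hnrx⟩ := DTWAux.canon x hx0 hx1
  obtain ⟨u, hu, hune, huodd, hyu, hrly, hnry⟩ := DTWAux.canon y hy0 hy1
  have hlk : u.length ≤ w.length := by rwa [hnrx, hnry] at hkl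
  have hlw : 1 ≤ w.length := List.length_pos_iff.2 hwne
  have hlu : 1 ≤ u.length := List.length_pos_iff.2 hune
  set Sd : Set ℕ := {v : ℕ | ∃ xb yb : List (Fin 2), IsExpansionOf xb x ∧ IsExpansionOf yb y ∧
    xb.length = yb.length ∧ corrValue xb yb = v} with hSd
  set Sr : Set ℕ := {v : ℕ | ∃ R : Finset ℕ,
      R ⊆ Finset.Icc 2 (numRuns x - 1) ∧ (∀ i ∈ R, i + 1 ∉ R) ∧
      R.card = (numRuns x - numRuns y) / 2 ∧
      ∑ i ∈ R, (runLengths x).getD (i - 1) 0 = v} with hSr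
  -- claim A : for each v in Sr there is t in Sd with t ≤ v
  have hA : ∀ v ∈ Sr, ∃ t ∈ Sd, t ≤ v := by
    intro v hv
    obtain ⟨R, hR1, hR2, hR3, hR4⟩ := hv
    rw [hnrx] at hR1
    rw [hnrx, hnry] at hR3
    have hmem2 : ∀ i ∈ R, 1 ≤ i := by
      intro i hi
      have := Finset.mem_Icc.1 (hR1 hi)
      omega
    obtain ⟨S, hSmem, hScard, hSsum⟩ := DTWAux.shift_down R 1 hmem2 (fun j => w.getD j 0)
    obtain ⟨xb, yb, hxe, hye, hlen, hcost⟩ := DTWAux.ub_master w.length w u 0 S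
      le_rfl hwne hune hw hu hlk (by omega)
      (by intro j hj
          have hj' := (hSmem j).1 hj
          have := Finset.mem_Icc.1 (hR1 hj')
          rw [Finset.mem_Icc]
          omega)
      (by intro j hj hj1
          exact hR2 (j + 1) ((hSmem j).1 hj) ((hSmem (j + 1)).1 hj1))
      (by rw [hScard, hR3])
    refine ⟨corrValue xb yb, ⟨xb, yb, ?_, ?_, hlen, rfl⟩, ?_⟩
    · rw [DTWAux.exp_iff, hxw]; exact hxe
    · rw [DTWAux.exp_iff, hyu]; exact hye
    · refine le_trans hcost ?_
      rw [hSsum, ← hR4, hrlx]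
  -- claim B : for each t in Sd there is v in Sr with v ≤ t
  have hB : ∀ t ∈ Sd, ∃ v ∈ Sr, v ≤ t := by
    intro t ht
    obtain ⟨xb, yb, hxe, hye, hlen, hcost⟩ := ht
    rw [DTWAux.exp_iff, hxw] at hxe
    rw [DTWAux.exp_iff, hyu] at hye
    obtain ⟨w', hww', rfl⟩ := DTWAux.exp_blk hw hxe
    obtain ⟨u', huu', rfl⟩ := DTWAux.exp_blk hu hye
    have hw' : ∀ a ∈ w', 1 ≤ a := DTWAux.forall₂_one_le hww' hw
    have hu' : ∀ a ∈ u', 1 ≤ a := DTWAux.forall₂_one_le huu' hu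
    have hlw' : w'.length = w.length := (List.Forall₂.length_eq hww').symm
    have hlu' : u'.length = u.length := (List.Forall₂.length_eq huu').symm
    have hsum' : w'.sum = u'.sum := by
      rw [DTWAux.blk_length, DTWAux.blk_length] at hlen
      exact hlen
    obtain ⟨R₀, hR1, hR2, hR3, hR4⟩ := DTWAux.lb_master w'.sum w' u' 0 0 false
      le_rfl (by rw [← List.length_pos_iff, hlw']; omega)
      (by rw [← List.length_pos_iff, hlu']; omega) hw' hu' hsum'
      (by rw [hlw', hlu']; constructor
          · intro _; omega
          · intro _; rfl)
      (by simp)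
    have hR1' : R₀ ⊆ Finset.Icc 1 (w'.length - 2) := by simpa using hR1
    have hR3' : R₀.card = (w'.length - u'.length) / 2 := by simpa using hR3
    refine ⟨∑ i ∈ R₀.map DTWAux.upShift, (runLengths x).getD (i - 1) 0, ⟨R₀.map DTWAux.upShift,
      ?_, DTWAux.no2_upShift hR2, ?_, rfl⟩, ?_⟩
    · intro j hj
      obtain ⟨i, hi, rfl⟩ := DTWAux.mem_upShift.1 hj
      have := Finset.mem_Icc.1 (hR1' hi)
      rw [Finset.mem_Icc, hnrx, ← hlw']
      omega
    · rw [Finset.card_map, hR3', hnrx, hnry, hlw', hlu']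
    · have heq : ∑ i ∈ R₀.map DTWAux.upShift, (runLengths x).getD (i - 1) 0
          = ∑ i ∈ R₀, w.getD i 0 := by
        rw [Finset.sum_map]
        apply Finset.sum_congr rfl
        intro i _
        simp [DTWAux.upShift_apply, hrlx]
      rw [heq]
      exact le_trans (Finset.sum_le_sum (fun i _ => DTWAux.forall₂_getD_le hww' i))
        (le_trans hR4 hcost.le)
  -- Sr is nonempty
  have hSrne : Sr.Nonempty := by
    refine ⟨∑ i ∈ (Finset.range ((w.length - u.length) / 2)).image (fun j => 2 * j + 2),
      (runLengths x).getD (i - 1) 0,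
      (Finset.range ((w.length - u.length) / 2)).image (fun j => 2 * j + 2), ?_, ?_, ?_, rfl⟩
    · intro i hi
      obtain ⟨j, hj, rfl⟩ := Finset.mem_image.1 hi
      have := Finset.mem_range.1 hj
      rw [Finset.mem_Icc, hnrx]
      omega
    · intro i hi h1
      obtain ⟨j, hj, rfl⟩ := Finset.mem_image.1 hi
      obtain ⟨j', hj', hj'eq⟩ := Finset.mem_image.1 h1
      omega
    · rw [Finset.card_image_of_injOn (fun a _ b _ h => by omega), Finset.card_range,
        hnrx, hnry]
  -- conclude
  obtain ⟨t0, ht0Sd, ht0le⟩ := hA _ (Nat.sInf_mem hSrne)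
  have hSdne : Sd.Nonempty := ⟨t0, ht0Sd⟩
  obtain ⟨v0, hv0Sr, hv0le⟩ := hB _ (Nat.sInf_mem hSdne)
  have h1 : sInf Sd ≤ sInf Sr := le_trans (Nat.sInf_le ht0Sd) ht0le
  have h2 : sInf Sr ≤ sInf Sd := le_trans (Nat.sInf_le hv0Sr) hv0le
  have : DTW x y = sInf Sd := rfl
  rw [this]
  omega
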